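/- If F and G are nonzero polynomials in two variables over a field k with no common (non-unit) factor, then the set of common zeros V(F) ∩ V(G) = {(x,y) ∈ k² : F(x,y) = 0 and G(x,y) = 0} is finite. -/

import Mathlib

open Polynomial

theorem exists_C_combination {R : Type*} [CommRing R] [IsDomain R] [NormalizedGCDMonoid R]
    (F G : R[X]) (hF : F ≠ 0) (hG : G ≠ 0)
    (hcop : ∀ d : R[X], d ∣ F → d ∣ G → IsUnit d) :
    ∃ r : R, r ≠ 0 ∧ ∃ u v : R[X], u * F + v * G = Polynomial.C r := by
  classical
  let K := FractionRing R
  let φ : R →+* K := algebraMap R K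
  have hinj : Function.Injective φ := IsFractionRing.injective R K
  have hinjX : Function.Injective (Polynomial.map φ) := Polynomial.map_injective φ hinj
  have hF' : F.map φ ≠ 0 := fun h => hF (hinjX (by simpa using h))
  have hG' : G.map φ ≠ 0 := fun h => hG (hinjX (by simpa using h))
  -- Step 1: coprime in K[X]
  have hco : IsCoprime (F.map φ) (G.map φ) := by
    rw [← EuclideanDomain.gcd_isUnit_iff]
    set d := EuclideanDomain.gcd (F.map φ) (G.map φ) with hd
    have hd0 : d ≠ 0 := by
      intro h
      exact hF' (EuclideanDomain.gcd_eq_zero_iff.mp h).1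
    set N := IsLocalization.integerNormalization (nonZeroDivisors R) d with hN
    have hN0 : N ≠ 0 := by
      intro h
      exact hd0 (IsFractionRing.integerNormalization_eq_zero_iff.mp h)
    obtain ⟨s, hs⟩ := IsLocalization.integerNormalization_map_to_map (nonZeroDivisors R) d
    have hs' : N.map φ = Polynomial.C (φ s) * d := by
      rw [hs, Algebra.smul_def, Polynomial.algebraMap_apply]
    have hc0 : φ N.content ≠ 0 := fun h => hN0 (content_eq_zero_iff.mp
      ((injective_iff_map_eq_zero φ).mp hinj _ h))
    have hs0 : φ (s : R) ≠ 0 := fun h => by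
      have := (injective_iff_map_eq_zero φ).mp hinj _ h
      exact mem_nonZeroDivisors_iff_ne_zero.mp s.2 this
    have key : Polynomial.C (φ N.content) * (N.primPart.map φ) = Polynomial.C (φ s) * d := by
      rw [← hs']
      conv_rhs => rw [N.eq_C_content_mul_primPart]
      rw [Polynomial.map_mul, Polynomial.map_C]
    have hassoc : Associated (N.primPart.map φ) d := by
      have h1 : Associated (N.primPart.map φ) (Polynomial.C (φ N.content) * N.primPart.map φ) :=
        (associated_unit_mul_left _ _ (Polynomial.isUnit_C.2 (isUnit_iff_ne_zero.2 hc0))).symm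
      have h2 : Associated (Polynomial.C (φ s) * d) d :=
        associated_unit_mul_left _ _ (Polynomial.isUnit_C.2 (isUnit_iff_ne_zero.2 hs0))
      exact (h1.trans (key ▸ Associated.refl _)).trans h2
    have hpF : N.primPart ∣ F := by
      have hdvd : N.primPart.map φ ∣ F.map φ :=
        hassoc.dvd.trans (EuclideanDomain.gcd_dvd_left _ _)
      have hFc : F.map φ = Polynomial.C (φ F.content) * F.primPart.map φ := by
        rw [← Polynomial.map_C, ← Polynomial.map_mul]
        congr 1
        exact F.eq_C_content_mul_primPart
      have hFc0 : IsUnit (Polynomial.C (φ F.content) : K[X]) :=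
        Polynomial.isUnit_C.2 (isUnit_iff_ne_zero.2 fun h => hF (content_eq_zero_iff.mp
          ((injective_iff_map_eq_zero φ).mp hinj _ h)))
      have : N.primPart.map φ ∣ F.primPart.map φ := by
        rw [hFc] at hdvd
        exact hFc0.dvd_mul_left.mp hdvd
      exact (N.isPrimitive_primPart.dvd_of_fraction_map_dvd_fraction_map
        this).trans (F.primPart_dvd)
    have hpG : N.primPart ∣ G := by
      have hdvd : N.primPart.map φ ∣ G.map φ :=
        hassoc.dvd.trans (EuclideanDomain.gcd_dvd_right _ _)
      have hGc : G.map φ = Polynomial.C (φ G.content) * G.primPart.map φ := by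
        rw [← Polynomial.map_C, ← Polynomial.map_mul]
        congr 1
        exact G.eq_C_content_mul_primPart
      have hGc0 : IsUnit (Polynomial.C (φ G.content) : K[X]) :=
        Polynomial.isUnit_C.2 (isUnit_iff_ne_zero.2 fun h => hG (content_eq_zero_iff.mp
          ((injective_iff_map_eq_zero φ).mp hinj _ h)))
      have : N.primPart.map φ ∣ G.primPart.map φ := by
        rw [hGc] at hdvd
        exact hGc0.dvd_mul_left.mp hdvd
      exact (N.isPrimitive_primPart.dvd_of_fraction_map_dvd_fraction_map
        this).trans (G.primPart_dvd)
    exact Polynomial.isUnit_or_eq_zero_of_isUnit_integerNormalization_primPart hd0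
      (hcop _ hpF hpG)
  -- Step 2: clear denominators
  obtain ⟨a, b, hab⟩ := hco
  obtain ⟨sa, ha⟩ := IsLocalization.integerNormalization_map_to_map (nonZeroDivisors R) a
  obtain ⟨sb, hb⟩ := IsLocalization.integerNormalization_map_to_map (nonZeroDivisors R) b
  have ha' : (IsLocalization.integerNormalization (nonZeroDivisors R) a).map φ = Polynomial.C (φ sa) * a := by
    rw [ha, Algebra.smul_def, Polynomial.algebraMap_apply]
  have hb' : (IsLocalization.integerNormalization (nonZeroDivisors R) b).map φ = Polynomial.C (φ sb) * b := by
    rw [hb, Algebra.smul_def, Polynomial.algebraMap_apply]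
  refine ⟨(sa : R) * (sb : R),
    mul_ne_zero (mem_nonZeroDivisors_iff_ne_zero.mp sa.2) (mem_nonZeroDivisors_iff_ne_zero.mp sb.2),
    Polynomial.C (sb : R) * IsLocalization.integerNormalization (nonZeroDivisors R) a,
    Polynomial.C (sa : R) * IsLocalization.integerNormalization (nonZeroDivisors R) b, ?_⟩
  apply hinjX
  rw [Polynomial.map_add, Polynomial.map_mul, Polynomial.map_mul, Polynomial.map_mul,
    Polynomial.map_mul, ha', hb', Polynomial.map_C, Polynomial.map_C, Polynomial.map_C, map_mul]
  rw [Polynomial.C_mul]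
  linear_combination (Polynomial.C (φ sa) * Polynomial.C (φ sb)) * hab

open MvPolynomial Set

theorem snd_finite_aux {k : Type*} [Field k]
    (F G : MvPolynomial (Fin 2) k) (hF : F ≠ 0) (hG : G ≠ 0)
    (hcop : ∀ d : MvPolynomial (Fin 2) k, d ∣ F → d ∣ G → IsUnit d) :
    ∃ T : Set k, T.Finite ∧
      ∀ x y : k, eval ![x, y] F = 0 → eval ![x, y] G = 0 → y ∈ T := by
  classical
  letI : NormalizationMonoid (MvPolynomial (Fin 1) k) :=
    UniqueFactorizationMonoid.normalizationMonoid.toNormalizationMonoid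
  letI := UniqueFactorizationMonoid.toNormalizedGCDMonoid (MvPolynomial (Fin 1) k)
  set e := finSuccEquiv k 1 with he
  have hF' : e F ≠ 0 := by
    intro h; exact hF (by simpa using e.injective (by simpa using h))
  have hG' : e G ≠ 0 := by
    intro h; exact hG (by simpa using e.injective (by simpa using h))
  have hcop' : ∀ d, d ∣ e F → d ∣ e G → IsUnit d := by
    intro d h1 h2
    have k1 : e.symm d ∣ F := by
      have := map_dvd e.symm.toAlgHom h1
      simpa using this
    have k2 : e.symm d ∣ G := by
      have := map_dvd e.symm.toAlgHom h2
      simpa using this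
    have := (hcop _ k1 k2).map e.toAlgHom
    simpa using this
  obtain ⟨r, hr0, u, v, huv⟩ := exists_C_combination (e F) (e G) hF' hG' hcop'
  refine ⟨{y : k | eval ![y] r = 0}, ?_, ?_⟩
  · -- finiteness of roots of a nonzero one-variable mv polynomial
    set q : Polynomial k :=
      Polynomial.map (MvPolynomial.eval (fun _ : Fin 0 => (0 : k))) (finSuccEquiv k 0 r) with hq
    have hevinj : Function.Injective (MvPolynomial.eval (fun _ : Fin 0 => (0 : k)) : MvPolynomial (Fin 0) k → k) := by
      intro p p' h
      obtain ⟨x, rfl⟩ := MvPolynomial.C_surjective (Fin 0) p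
      obtain ⟨x', rfl⟩ := MvPolynomial.C_surjective (Fin 0) p'
      simpa using h
    have hq0 : q ≠ 0 := by
      intro h
      apply hr0
      apply (finSuccEquiv k 0).injective
      apply Polynomial.map_injective _ hevinj
      rw [map_zero, Polynomial.map_zero, ← hq]
      exact h
    have hsub : {y : k | eval ![y] r = 0} ⊆ {y : k | q.IsRoot y} := by
      intro y hy
      have := eval_eq_eval_mv_eval' (fun _ : Fin 0 => (0 : k)) y r
      have harg : (Fin.cons y (fun _ : Fin 0 => (0 : k)) : Fin 1 → k) = ![y] := by
        funext i; fin_cases i <;> rfl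
      rw [harg] at this
      show Polynomial.eval y q = 0
      rw [hq, ← this]
      exact hy
    exact (Polynomial.finite_setOf_isRoot hq0).subset hsub
  · intro x y hx hy
    have hevF : eval ![x, y] F = Polynomial.eval x (Polynomial.map (eval ![y]) (e F)) := by
      have := eval_eq_eval_mv_eval' ![y] x F
      have harg : (Fin.cons x ![y] : Fin 2 → k) = ![x, y] := by
        funext i; fin_cases i <;> rfl
      rwa [harg] at this
    have hevG : eval ![x, y] G = Polynomial.eval x (Polynomial.map (eval ![y]) (e G)) := by
      have := eval_eq_eval_mv_eval' ![y] x G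
      have harg : (Fin.cons x ![y] : Fin 2 → k) = ![x, y] := by
        funext i; fin_cases i <;> rfl
      rwa [harg] at this
    have := congrArg (fun p => Polynomial.eval x (Polynomial.map (eval ![y]) p)) huv
    simp only [Polynomial.map_add, Polynomial.map_mul, Polynomial.eval_add, Polynomial.eval_mul,
      Polynomial.map_C, Polynomial.eval_C, ← hevF, ← hevG, hx, hy, mul_zero, add_zero,
      zero_add] at this
    exact this.symm

theorem coprime_polynomials_finite_common_zeros {k : Type*} [Field k]
    (F G : MvPolynomial (Fin 2) k) (hF : F ≠ 0) (hG : G ≠ 0)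
    (hcop : ∀ d : MvPolynomial (Fin 2) k, d ∣ F → d ∣ G → IsUnit d) :
    {p : k × k | eval ![p.1, p.2] F = 0 ∧ eval ![p.1, p.2] G = 0}.Finite := by
  classical
  obtain ⟨T, hT, hTmem⟩ := snd_finite_aux F G hF hG hcop
  set σ := renameEquiv k (Equiv.swap (0 : Fin 2) 1) with hσ
  have hswap : ∀ (x y : k) (P : MvPolynomial (Fin 2) k),
      eval ![y, x] (σ P) = eval ![x, y] P := by
    intro x y P
    rw [hσ, renameEquiv_apply, eval_rename]
    have harg : (![y, x] ∘ (Equiv.swap (0 : Fin 2) 1)) = ![x, y] := by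
      funext i
      fin_cases i <;> simp [Equiv.swap_apply_left, Equiv.swap_apply_right]
    rw [harg]
  have hF2 : σ F ≠ 0 := by
    intro h; exact hF (by simpa using σ.injective (by simpa using h))
  have hG2 : σ G ≠ 0 := by
    intro h; exact hG (by simpa using σ.injective (by simpa using h))
  have hcop2 : ∀ d, d ∣ σ F → d ∣ σ G → IsUnit d := by
    intro d h1 h2
    have k1 : σ.symm d ∣ F := by
      have := map_dvd σ.symm.toAlgHom h1; simpa using this
    have k2 : σ.symm d ∣ G := by
      have := map_dvd σ.symm.toAlgHom h2; simpa using this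
    have := (hcop _ k1 k2).map σ.toAlgHom
    simpa using this
  obtain ⟨T', hT', hT'mem⟩ := snd_finite_aux (σ F) (σ G) hF2 hG2 hcop2
  apply (hT'.prod hT).subset
  rintro ⟨x, y⟩ ⟨h1, h2⟩
  refine ⟨?_, hTmem x y h1 h2⟩
  exact hT'mem y x (by rw [hswap]; exact h1) (by rw [hswap]; exact h2)
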